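/- Let g(x) = φ(x)(φ(x) - x·Φ(-x)) where φ and Φ are the standard normal density and CDF. For any ξ ≥ 0 and any β ∈ [0, π/2), the integral L(β) := ∫_0^∞ φ(x)(Φ(ξ + x·tan β) - Φ(ξ - x·tan β)) dx satisfies L(β) ≤ (1/π)·tan β. -/

import Mathlib

open MeasureTheory Real

noncomputable def stdPhi (x : ℝ) : ℝ := Real.exp (-x ^ 2 / 2) / Real.sqrt (2 * Real.pi)

noncomputable def stdCdf (x : ℝ) : ℝ := ∫ t in Set.Iic x, stdPhi t

lemma stdPhi_nonneg (x : ℝ) : 0 ≤ stdPhi x :=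
  div_nonneg (Real.exp_pos _).le (Real.sqrt_nonneg _)

lemma stdPhi_le (x : ℝ) : stdPhi x ≤ 1 / Real.sqrt (2 * Real.pi) := by
  have h : Real.exp (-x ^ 2 / 2) ≤ 1 := by
    rw [Real.exp_le_one_iff]
    nlinarith [sq_nonneg x]
  unfold stdPhi
  gcongr

lemma stdPhi_eq (x : ℝ) : stdPhi x = Real.exp (-(1/2) * x ^ 2) / Real.sqrt (2 * Real.pi) := by
  unfold stdPhi; ring_nf

lemma stdPhi_integrable : Integrable stdPhi := by
  have := (integrable_exp_neg_mul_sq (by norm_num : (0:ℝ) < 1/2)).div_const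
    (Real.sqrt (2 * Real.pi))
  exact this.congr (Filter.Eventually.of_forall fun x => (stdPhi_eq x).symm)

lemma stdCdf_diff_le {a b : ℝ} (hab : a ≤ b) :
    stdCdf b - stdCdf a ≤ (b - a) / Real.sqrt (2 * Real.pi) := by
  unfold stdCdf
  rw [intervalIntegral.integral_Iic_sub_Iic stdPhi_integrable.integrableOn
      stdPhi_integrable.integrableOn, intervalIntegral.integral_of_le hab]
  calc ∫ t in Set.Ioc a b, stdPhi t
      ≤ ∫ _ in Set.Ioc a b, 1 / Real.sqrt (2 * Real.pi) := by
        apply setIntegral_mono_on stdPhi_integrable.integrableOn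
          (integrableOn_const measure_Ioc_lt_top.ne) measurableSet_Ioc
        intro t _; exact stdPhi_le t
    _ = (b - a) / Real.sqrt (2 * Real.pi) := by
        rcases le_or_gt b a with h | h
        · have hba : b = a := le_antisymm h hab
          simp [hba, Set.Ioc_self]
        · rw [setIntegral_const, Real.volume_real_Ioc_of_le hab]
          simp [smul_eq_mul]; ring
    
lemma stdCdf_diff_nonneg {a b : ℝ} (hab : a ≤ b) : 0 ≤ stdCdf b - stdCdf a := by
  unfold stdCdf
  rw [intervalIntegral.integral_Iic_sub_Iic stdPhi_integrable.integrableOn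
      stdPhi_integrable.integrableOn, intervalIntegral.integral_of_le hab]
  exact setIntegral_nonneg measurableSet_Ioc fun t _ => stdPhi_nonneg t

lemma integral_x_exp : (∫ x in Set.Ioi (0:ℝ), x * Real.exp (-x ^ 2 / 2)) = 1 := by
  have hderiv : ∀ x ∈ Set.Ioi (0:ℝ),
      HasDerivAt (fun y : ℝ => -Real.exp (-y ^ 2 / 2)) (x * Real.exp (-x ^ 2 / 2)) x := by
    intro x _
    have h1 : HasDerivAt (fun y : ℝ => -y ^ 2 / 2) (-x) x := by
      have := ((hasDerivAt_pow 2 x).neg).div_const 2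
      exact this.congr_deriv (by norm_num; ring)
    have := (h1.exp).neg
    exact this.congr_deriv (by ring)
  have hint : IntegrableOn (fun x : ℝ => x * Real.exp (-x ^ 2 / 2)) (Set.Ioi 0) := by
    have := (integrable_mul_exp_neg_mul_sq (by norm_num : (0:ℝ) < 1/2)).integrableOn
      (s := Set.Ioi (0:ℝ))
    exact this.congr_fun (fun x _ => by ring_nf) measurableSet_Ioi
  have htend : Filter.Tendsto (fun y : ℝ => -Real.exp (-y ^ 2 / 2)) Filter.atTop (nhds 0) := by
    rw [show (0:ℝ) = -0 by ring]
    refine Filter.Tendsto.neg ?_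
    apply Real.tendsto_exp_atBot.comp
    apply Filter.Tendsto.atBot_div_const (by norm_num : (0:ℝ) < 2)
    exact Filter.tendsto_neg_atBot_iff.mpr (Filter.tendsto_pow_atTop two_ne_zero)
  have hcont : ContinuousWithinAt (fun y : ℝ => -Real.exp (-y ^ 2 / 2)) (Set.Ici 0) 0 :=
    (Continuous.continuousWithinAt (by continuity))
  have := MeasureTheory.integral_Ioi_of_hasDerivAt_of_tendsto hcont hderiv hint htend
  rw [this]; norm_num

/-- Upper bound on the misclustering integral:
`∫_0^∞ φ(x)(Φ(ξ + x tan β) - Φ(ξ - x tan β)) dx ≤ (1/π) tan β`. -/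
theorem cluster_loss_integral_upper (ξ β : ℝ) (hξ : 0 ≤ ξ)
    (hβ0 : 0 ≤ β) (hβ : β < Real.pi / 2) :
    (∫ x in Set.Ioi (0 : ℝ),
        stdPhi x * (stdCdf (ξ + x * Real.tan β) - stdCdf (ξ - x * Real.tan β)))
      ≤ Real.tan β / Real.pi := by
  set t := Real.tan β with ht_def
  have ht : 0 ≤ t := Real.tan_nonneg_of_nonneg_of_le_pi_div_two hβ0 hβ.le
  set g : ℝ → ℝ := fun x => t / Real.pi * (x * Real.exp (-x ^ 2 / 2)) with hg_def
  have hgi : Integrable g (volume.restrict (Set.Ioi 0)) := by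
    have := (integrable_mul_exp_neg_mul_sq (by norm_num : (0:ℝ) < 1/2)).integrableOn
      (s := Set.Ioi (0:ℝ))
    have h2 := this.const_mul (t / Real.pi)
    have h3 : IntegrableOn (fun x => t / Real.pi * (x * Real.exp (-(1/2) * x ^ 2))) (Set.Ioi 0) := h2
    exact h3.congr_fun (fun x _ => by rw [hg_def]; ring_nf) measurableSet_Ioi
  have key : (∫ x in Set.Ioi (0 : ℝ),
      stdPhi x * (stdCdf (ξ + x * t) - stdCdf (ξ - x * t))) ≤ ∫ x in Set.Ioi (0:ℝ), g x := by
    apply integral_mono_of_nonneg _ hgi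
    · rw [Filter.EventuallyLE, ae_restrict_iff' measurableSet_Ioi]
      refine Filter.Eventually.of_forall fun x hx => ?_
      have hx0 : (0:ℝ) < x := hx
      have hab : ξ - x * t ≤ ξ + x * t := by nlinarith
      have hd := stdCdf_diff_le hab
      have hdn := stdCdf_diff_nonneg hab
      have h1 : stdPhi x * (stdCdf (ξ + x * t) - stdCdf (ξ - x * t))
          ≤ stdPhi x * ((ξ + x * t - (ξ - x * t)) / Real.sqrt (2 * Real.pi)) :=
        mul_le_mul_of_nonneg_left hd (stdPhi_nonneg x)
      refine h1.trans_eq ?_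
      have hsq : Real.sqrt (2 * Real.pi) * Real.sqrt (2 * Real.pi) = 2 * Real.pi :=
        Real.mul_self_sqrt (by positivity)
      have hsqne : Real.sqrt (2 * Real.pi) ≠ 0 := by positivity
      rw [hg_def]; unfold stdPhi
      have hpi : Real.pi ≠ 0 := Real.pi_ne_zero
      rw [show ξ + x * t - (ξ - x * t) = 2 * (x * t) by ring, div_mul_div_comm, hsq]
      field_simp
    · rw [Filter.EventuallyLE, ae_restrict_iff' measurableSet_Ioi]
      refine Filter.Eventually.of_forall fun x hx => ?_
      have hx0 : (0:ℝ) < x := hx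
      have hab : ξ - x * t ≤ ξ + x * t := by nlinarith
      exact mul_nonneg (stdPhi_nonneg x) (stdCdf_diff_nonneg hab)
  refine key.trans ?_
  rw [hg_def]
  rw [integral_const_mul, integral_x_exp, mul_one]
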